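/- Let X₁, …, X_n ∈ ℝ^d, y₁, …, y_n ∈ ℝ, and evaluation points x₁, …, x_m ∈ ℝ^d. Define F(α, β) = Σ_{j=1}^n ( y_j − α − ⟨β, X_j⟩ )² for (α, β) ∈ ℝ × ℝ^d, and let V = { (α_i, β_i)_{i=1}^m : α_i + ⟨β_i, x_i⟩ ≤ α_l + ⟨β_l, x_i⟩ for all i, l, and β_i ≥ 0 componentwise for all i }. Then inf over V of Σ_{i=1}^m F(α_i, β_i) equals m · inf { F(α, β) : β ≥ 0 componentwise }. Moreover, if F has a unique minimizer (α*, β*) over { (α, β) : β ≥ 0 } (which holds, e.g., when the vectors (1, X_j), j = 1,…,n, span ℝ^{d+1}, making F strictly convex and coercive), then every minimizer of Σ_{i=1}^m F(α_i, β_i) over V satisfies (α_i, β_i) = (α*, β*) for all i = 1,…,m. -/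
import Mathlib


open scoped RealInnerProductSpace

/-- The linear least-squares criterion F(α, β) = Σⱼ (yⱼ − α − ⟨β, Xⱼ⟩)². -/
noncomputable def linLSCriterion {d n : ℕ} (X : Fin n → EuclideanSpace ℝ (Fin d))
    (y : Fin n → ℝ) (p : ℝ × EuclideanSpace ℝ (Fin d)) : ℝ :=
  ∑ j, (y j - p.1 - ⟪p.2, X j⟫) ^ 2

/-- The Afriat (concavity) constraints at evaluation points x₁,…,x_m together with
componentwise monotonicity constraints. -/
def afriatMonotoneSet {d m : ℕ} (xs : Fin m → EuclideanSpace ℝ (Fin d)) :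
    Set (Fin m → ℝ × EuclideanSpace ℝ (Fin d)) :=
  {c | (∀ i l, (c i).1 + ⟪(c i).2, xs i⟫ ≤ (c l).1 + ⟪(c l).2, xs i⟫) ∧
    ∀ i k, 0 ≤ (c i).2 k}

/-- Proposition A.2: the infimum over the Afriat-constrained set of the separable sum
Σᵢ F(αᵢ, βᵢ) equals m times the infimum of F over the monotonicity-constrained set, and
if F has a unique minimizer over {β ≥ 0} then every constrained minimizer replicates it
at each evaluation point. -/
theorem sckls_infinite_bandwidth_collapse
    {d n m : ℕ} (X : Fin n → EuclideanSpace ℝ (Fin d)) (y : Fin n → ℝ)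
    (xs : Fin m → EuclideanSpace ℝ (Fin d)) (hm : 0 < m) :
    ((⨅ c : afriatMonotoneSet xs, ∑ i, linLSCriterion X y (c.1 i)) =
      m * ⨅ p : {p : ℝ × EuclideanSpace ℝ (Fin d) // ∀ k, 0 ≤ p.2 k},
            linLSCriterion X y p.1) ∧
    (∀ pstar : ℝ × EuclideanSpace ℝ (Fin d), (∀ k, 0 ≤ pstar.2 k) →
      (∀ p : ℝ × EuclideanSpace ℝ (Fin d), (∀ k, 0 ≤ p.2 k) →
        linLSCriterion X y pstar ≤ linLSCriterion X y p) →
      (∀ p : ℝ × EuclideanSpace ℝ (Fin d), (∀ k, 0 ≤ p.2 k) →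
        (∀ p' : ℝ × EuclideanSpace ℝ (Fin d), (∀ k, 0 ≤ p'.2 k) →
          linLSCriterion X y p ≤ linLSCriterion X y p') → p = pstar) →
      ∀ c ∈ afriatMonotoneSet xs,
        (∀ c' ∈ afriatMonotoneSet xs,
          ∑ i, linLSCriterion X y (c i) ≤ ∑ i, linLSCriterion X y (c' i)) →
        ∀ i, c i = pstar) := by
  classical
  set F := linLSCriterion X y with hFdef
  have hF0 : ∀ p, 0 ≤ F p := fun p => Finset.sum_nonneg fun j _ => sq_nonneg _
  have hconst : ∀ p : ℝ × EuclideanSpace ℝ (Fin d), (∀ k, 0 ≤ p.2 k) →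
      (fun _ : Fin m => p) ∈ afriatMonotoneSet xs :=
    fun p hp => ⟨fun i l => le_rfl, fun i k => hp k⟩
  have h00 : ∀ k, 0 ≤ (0 : EuclideanSpace ℝ (Fin d)) k := fun k => le_rfl
  haveI hne1 : Nonempty (afriatMonotoneSet xs) :=
    ⟨⟨fun _ => ((0 : ℝ), (0 : EuclideanSpace ℝ (Fin d))), hconst _ h00⟩⟩
  haveI hne2 : Nonempty {p : ℝ × EuclideanSpace ℝ (Fin d) // ∀ k, 0 ≤ p.2 k} :=
    ⟨⟨((0 : ℝ), (0 : EuclideanSpace ℝ (Fin d))), h00⟩⟩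
  have hbdd2 : BddBelow (Set.range fun p : {p : ℝ × EuclideanSpace ℝ (Fin d) // ∀ k, 0 ≤ p.2 k}
      => F p.1) := ⟨0, fun x ⟨p, hp⟩ => hp ▸ hF0 p.1⟩
  have hbdd1 : BddBelow (Set.range fun c : afriatMonotoneSet xs => ∑ i, F (c.1 i)) :=
    ⟨0, fun x ⟨cc, hc⟩ => hc ▸ Finset.sum_nonneg fun i _ => hF0 _⟩
  set I2 := ⨅ p : {p : ℝ × EuclideanSpace ℝ (Fin d) // ∀ k, 0 ≤ p.2 k}, F p.1 with hI2
  have hI2le : ∀ p : ℝ × EuclideanSpace ℝ (Fin d), (∀ k, 0 ≤ p.2 k) → I2 ≤ F p :=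
    fun p hp => ciInf_le hbdd2 ⟨p, hp⟩
  constructor
  · apply le_antisymm
    · rw [Real.mul_iInf_of_nonneg (by positivity : (0:ℝ) ≤ (m:ℝ))]
      refine le_ciInf fun p => ?_
      have : (⨅ c : afriatMonotoneSet xs, ∑ i, F (c.1 i)) ≤ ∑ _i : Fin m, F p.1 :=
        ciInf_le hbdd1 ⟨fun _ => p.1, hconst _ p.2⟩
      simpa [Finset.sum_const, nsmul_eq_mul] using this
    · refine le_ciInf fun c => ?_
      calc (m : ℝ) * I2 = ∑ _i : Fin m, I2 := by
            simp [Finset.sum_const, nsmul_eq_mul]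
        _ ≤ ∑ i, F (c.1 i) :=
            Finset.sum_le_sum fun i _ => hI2le (c.1 i) (fun k => c.2.2 i k)
  · intro pstar hpstar hle huniq c hc hmin
    have hsum : ∑ i, F (c i) ≤ ∑ _i : Fin m, F pstar :=
      hmin (fun _ => pstar) (hconst _ hpstar)
    have heach : ∀ i, F pstar ≤ F (c i) := fun i => hle (c i) (fun k => hc.2 i k)
    have hzero : ∑ i : Fin m, (F (c i) - F pstar) = 0 := by
      apply le_antisymm
      · simpa [Finset.sum_sub_distrib] using sub_nonpos.mpr hsum
      · exact Finset.sum_nonneg fun i _ => sub_nonneg.mpr (heach i)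
    have heq : ∀ i, F (c i) = F pstar := by
      intro i
      have := (Finset.sum_eq_zero_iff_of_nonneg
        (fun i _ => sub_nonneg.mpr (heach i))).mp hzero i (Finset.mem_univ i)
      linarith [this]
    intro i
    exact huniq (c i) (fun k => hc.2 i k)
      (fun p' hp' => (heq i) ▸ hle p' hp')
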